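/- Let d≥1, r≥1, a>0, and μ>0. There exists a constant C = C(d,a) > 0, independent of r, μ, and x, such that for all x∈Λ_r: Σ_{u∈ℤ^d, u≠0} ||x+ru||_∞^{−(d−a)} · e^{−μ||x+ru||_∞} ≤ C · e^{−μr/4} · μ^{−a} · r^{−d}. -/

import Mathlib

open scoped BigOperators

noncomputable section

namespace IsingPlateau

/-- The spin value (±1) associated to a Boolean. -/
def spin (b : Bool) : ℝ := if b then 1 else -1

/-- Hamiltonian for coupling constants `J`:
`H(σ) = -(1/2) Σ_x Σ_y J x y σ_x σ_y`, so that each unordered pair is counted once. -/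
def hamiltonian {V : Type*} [Fintype V] (J : V → V → ℝ) (σ : V → Bool) : ℝ :=
  -(1 / 2) * ∑ x : V, ∑ y : V, J x y * spin (σ x) * spin (σ y)

/-- Ising expectation of an observable `f` of the spin configuration. -/
def isingExpect {V : Type*} [Fintype V] [DecidableEq V] (J : V → V → ℝ) (β : ℝ)
    (f : (V → ℝ) → ℝ) : ℝ :=
  (∑ σ : V → Bool, f (fun v => spin (σ v)) * Real.exp (-β * hamiltonian J σ)) /
    ∑ σ : V → Bool, Real.exp (-β * hamiltonian J σ)

/-- The two-point function `⟨σ_x σ_y⟩`. -/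
def corr {V : Type*} [Fintype V] [DecidableEq V] (J : V → V → ℝ) (β : ℝ) (x y : V) : ℝ :=
  isingExpect J β fun s => s x * s y

/-- The four-point function `⟨σ_x σ_y σ_z σ_w⟩`. -/
def corr4 {V : Type*} [Fintype V] [DecidableEq V] (J : V → V → ℝ) (β : ℝ) (x y z w : V) : ℝ :=
  isingExpect J β fun s => s x * s y * s z * s w

/-- Nearest-neighbour adjacency on `Fin d → A`. -/
def nnAdj {d : ℕ} {A : Type*} [AddGroup A] [One A] (x y : Fin d → A) : Prop :=
  ∃ i : Fin d, y = x + Pi.single i 1 ∨ x = y + Pi.single i 1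

open Classical in
/-- Nearest-neighbour coupling constants. -/
def nnJ {d : ℕ} {A : Type*} [AddGroup A] [One A] (x y : Fin d → A) : ℝ :=
  if nnAdj x y then 1 else 0

/-- The coordinates of the box `[-r/2, r/2) ∩ ℤ`. -/
def boxCoord (r : ℕ) : Finset ℤ :=
  (Finset.Icc (-(r : ℤ)) r).filter fun a => -(r : ℤ) ≤ 2 * a ∧ 2 * a < r

/-- The box `Λ_r = [-r/2, r/2)^d ∩ ℤ^d`. -/
def boxFinset (d r : ℕ) : Finset (Fin d → ℤ) := Fintype.piFinset fun _ => boxCoord r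

/-- The two-point function of the nearest-neighbour Ising model on the box `Λ_r`
(with free boundary conditions), extended by `0` off the box. -/
def boxTau (d r : ℕ) (β : ℝ) (x y : Fin d → ℤ) : ℝ :=
  if h : x ∈ boxFinset d r ∧ y ∈ boxFinset d r then
    corr (V := ↥(boxFinset d r)) (fun a b => nnJ a.val b.val) β ⟨x, h.1⟩ ⟨y, h.2⟩
  else 0

/-- The infinite-volume two-point function `τ_β(x) = lim_{r→∞} τ_β^{Λ_r}(0,x)`
(the limit exists by Griffiths monotonicity). -/
def tauZd (d : ℕ) (β : ℝ) (x : Fin d → ℤ) : ℝ :=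
  Filter.limUnder Filter.atTop fun r : ℕ => boxTau d r β 0 x

/-- The infinite-volume susceptibility `χ(β) = Σ_{x∈ℤ^d} τ_β(x)`. -/
def chi (d : ℕ) (β : ℝ) : ℝ := ∑' x : Fin d → ℤ, tauZd d β x

/-- The critical inverse temperature `β_c = sup {β > 0 : χ(β) < ∞}`. -/
def betaC (d : ℕ) : ℝ :=
  sSup {β : ℝ | 0 < β ∧ Summable fun x : Fin d → ℤ => tauZd d β x}

/-- The two-point function `⟨σ_x σ_y⟩` of the nearest-neighbour Ising model
on the torus `𝕋_r = (ℤ/rℤ)^d`. -/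
def torusCorr (d r : ℕ) (β : ℝ) (x y : Fin d → ZMod r) : ℝ :=
  if h : r = 0 then 0
  else
    haveI : NeZero r := ⟨h⟩
    corr (nnJ (d := d) (A := ZMod r)) β x y

/-- The torus two-point function `τ_β^{𝕋_r}(x) = ⟨σ_0 σ_x⟩`. -/
def torusTau (d r : ℕ) (β : ℝ) (x : Fin d → ZMod r) : ℝ := torusCorr d r β 0 x

/-- The torus susceptibility `χ^{𝕋_r}(β)`. -/
def chiT (d r : ℕ) (β : ℝ) : ℝ :=
  if h : r = 0 then 0
  else
    haveI : NeZero r := ⟨h⟩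
    ∑ x : Fin d → ZMod r, torusTau d r β x

/-- The torus bubble diagram `𝖡(β) = Σ_x τ_β^{𝕋_r}(x)²`. -/
def bubbleT (d r : ℕ) (β : ℝ) : ℝ :=
  if h : r = 0 then 0
  else
    haveI : NeZero r := ⟨h⟩
    ∑ x : Fin d → ZMod r, torusTau d r β x ^ 2

/-- The `k`-th moment `⟨S_r^k⟩` of the average spin `S_r = r^{-d} Σ_x σ_x` on the torus. -/
def avgSpinMoment (d r : ℕ) (β : ℝ) (k : ℕ) : ℝ :=
  if h : r = 0 then 0
  else
    haveI : NeZero r := ⟨h⟩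
    isingExpect (nnJ (d := d) (A := ZMod r)) β fun s =>
      (((r : ℝ) ^ d)⁻¹ * ∑ x : Fin d → ZMod r, s x) ^ k

/-- The renormalised coupling constant `g^{𝕋_r}(β)`. -/
def gT (d r : ℕ) (β : ℝ) : ℝ :=
  -(avgSpinMoment d r β 4 - 3 * avgSpinMoment d r β 2 ^ 2) / avgSpinMoment d r β 2 ^ 2

/-- The torus four-point function `⟨σ_x σ_y σ_z σ_w⟩`. -/
def torusCorr4 (d r : ℕ) (β : ℝ) (x y z w : Fin d → ZMod r) : ℝ :=
  if h : r = 0 then 0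
  else
    haveI : NeZero r := ⟨h⟩
    corr4 (nnJ (d := d) (A := ZMod r)) β x y z w

/-- The torus Ursell function `U_4^{𝕋_r}`. -/
def torusU4 (d r : ℕ) (β : ℝ) (x y z w : Fin d → ZMod r) : ℝ :=
  torusCorr4 d r β x y z w - torusCorr d r β x y * torusCorr d r β z w -
    torusCorr d r β x z * torusCorr d r β y w - torusCorr d r β x w * torusCorr d r β y z

/-- The representative in `Λ_r` of a point of the torus `𝕋_r`. -/
def rep {d : ℕ} (r : ℕ) (x : Fin d → ZMod r) : Fin d → ℤ :=
  fun i => if 2 * (x i).val < r then ((x i).val : ℤ) else ((x i).val : ℤ) - r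

/-- The canonical projection `π : ℤ^d → 𝕋_r`. -/
def proj (d r : ℕ) (x : Fin d → ℤ) : Fin d → ZMod r := fun i => (x i : ZMod r)

/-- The sup norm `‖x‖_∞` on `ℤ^d`. -/
def supNorm {d : ℕ} (x : Fin d → ℤ) : ℕ := Finset.univ.sup fun i => (x i).natAbs

/-- `T_β^{(r)}(x) = Σ_{u∈ℤ^d} τ_β(x + ru)`. -/
def Tfun (d r : ℕ) (β : ℝ) (x : Fin d → ℤ) : ℝ :=
  ∑' u : Fin d → ℤ, tauZd d β (x + r • u)

/-- `T_β^{(r)}` viewed as a function on the torus (it is `r`-periodic). -/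
def TfunT (d r : ℕ) (β : ℝ) (x : Fin d → ZMod r) : ℝ := Tfun d r β (rep r x)

/-- The lift `τ_β ∘ π` of the infinite-volume two-point function to the torus. -/
def tauT (d r : ℕ) (β : ℝ) (x : Fin d → ZMod r) : ℝ := tauZd d β (rep r x)

/-- Torus convolution `(f ⋆ g)(x) = Σ_{y ∈ 𝕋_r} f(y) g(x - y)`. -/
def torusConv {d r : ℕ} (f g : (Fin d → ZMod r) → ℝ) (x : Fin d → ZMod r) : ℝ :=
  if h : r = 0 then 0
  else
    haveI : NeZero r := ⟨h⟩
    ∑ y : Fin d → ZMod r, f y * g (x - y)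

/-- `ℤ^d` convolution `(f * g)(x) = Σ_{y ∈ ℤ^d} f(y) g(x - y)`. -/
def zdConv {d : ℕ} (f g : (Fin d → ℤ) → ℝ) (x : Fin d → ℤ) : ℝ :=
  ∑' y : Fin d → ℤ, f y * g (x - y)

/-- `T_β^{(r,R)}(x) = Σ_{x' ∈ Λ_R, x' ≅ x} τ_β^{Λ_R}(0, x')`. -/
def TfunRR (d r R : ℕ) (β : ℝ) (x : Fin d → ZMod r) : ℝ :=
  ∑ x' ∈ (boxFinset d R).filter (fun x' => proj d r x' = x), boxTau d R β 0 x'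

section Currents

variable {V : Type*} [Fintype V] [DecidableEq V]

/-- The space of currents on the finite graph `G`: an element of `ℕ` for each edge. -/
abbrev CurrentSpace (G : SimpleGraph V) [DecidableRel G.Adj] : Type _ :=
  ↥G.edgeFinset → ℕ

open Classical in
/-- The source set `∂n` of a current `n`. -/
def sources {G : SimpleGraph V} [DecidableRel G.Adj] (n : CurrentSpace G) : Finset V :=
  Finset.univ.filter fun x =>
    Odd (∑ e : ↥G.edgeFinset, if x ∈ (e : Sym2 V) then n e else 0)

/-- The weight `w_β(n) = Π_{e∈E} β^{n_e}/n_e!` of a current. -/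
def wgt {G : SimpleGraph V} [DecidableRel G.Adj] (β : ℝ) (n : CurrentSpace G) : ℝ :=
  ∏ e : ↥G.edgeFinset, β ^ n e / (n e).factorial

open Classical in
/-- The partition function `Z^A_G[E]` with sources `A`, restricted to the event `E`. -/
def Zev {G : SimpleGraph V} [DecidableRel G.Adj] (β : ℝ) (A : Finset V)
    (E : Set (CurrentSpace G)) : ℝ :=
  ∑' n : CurrentSpace G, if sources n = A ∧ n ∈ E then wgt β n else 0

open Classical in
/-- The double-current partition function `Z^{A,B}_{G,G}[E]` restricted to the event `E`. -/
def Zev2 {G : SimpleGraph V} [DecidableRel G.Adj] (β : ℝ) (A B : Finset V)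
    (E : Set (CurrentSpace G × CurrentSpace G)) : ℝ :=
  ∑' p : CurrentSpace G × CurrentSpace G,
    if sources p.1 = A ∧ sources p.2 = B ∧ p ∈ E then wgt β p.1 * wgt β p.2 else 0

/-- Connectivity `x ↔ y` in the current `n`, using only edges of the subgraph `H`. -/
def ConnectedIn {G : SimpleGraph V} [DecidableRel G.Adj] (n : CurrentSpace G)
    (H : SimpleGraph V) (x y : V) : Prop :=
  Relation.ReflTransGen
    (fun a b => H.Adj a b ∧ ∃ e : ↥G.edgeFinset, (e : Sym2 V) = s(a, b) ∧ 0 < n e) x y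

end Currents




section AuxLemmas

open scoped ENNReal NNReal

lemma aux_rpow_le_exp {p lam s : ℝ} (hp : 0 ≤ p) (hlam : 0 < lam) (hs : 0 ≤ s) :
    s ^ p ≤ (p / lam) ^ p * Real.exp (lam * s) := by
  rcases eq_or_lt_of_le hp with hp0 | hp0
  · simp only [← hp0, Real.rpow_zero, one_mul]
    exact Real.one_le_exp (by positivity)
  · have hx : (0:ℝ) ≤ lam * s / p := by positivity
    have h1 : lam * s / p ≤ Real.exp (lam * s / p) := by
      have := Real.add_one_le_exp (lam * s / p); linarith
    have h2 : (lam * s / p) ^ p ≤ Real.exp (lam * s / p) ^ p :=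
      Real.rpow_le_rpow hx h1 hp
    have h3 : Real.exp (lam * s / p) ^ p = Real.exp (lam * s) := by
      rw [← Real.exp_mul]
      congr 1
      field_simp
    have h4 : s = p / lam * (lam * s / p) := by field_simp
    calc s ^ p = (p / lam * (lam * s / p)) ^ p := by rw [← h4]
      _ = (p / lam) ^ p * (lam * s / p) ^ p := Real.mul_rpow (by positivity) hx
      _ ≤ (p / lam) ^ p * Real.exp (lam * s) := by
          rw [← h3]; exact mul_le_mul_of_nonneg_left h2 (by positivity)

lemma aux_geom_sum_le {t : ℝ} (ht : 0 < t) (F : Finset ℕ) :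
    ∑ m ∈ F, Real.exp (-(t * (m + 1))) ≤ 2 / t := by
  set q := Real.exp (-t) with hqdef
  have hq1 : q < 1 := Real.exp_lt_one_iff.mpr (by linarith)
  have hq0 : 0 < q := Real.exp_pos _
  have hterm : ∀ m : ℕ, Real.exp (-(t * (m + 1))) = q * q ^ m := by
    intro m
    rw [hqdef, ← Real.exp_nat_mul, ← Real.exp_add]
    congr 1; push_cast; ring
  have hsummable : Summable fun m : ℕ => q * q ^ m :=
    (summable_geometric_of_lt_one hq0.le hq1).mul_left q
  have h1 : ∑ m ∈ F, Real.exp (-(t * (m + 1))) ≤ ∑' m : ℕ, q * q ^ m := by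
    rw [Finset.sum_congr rfl fun m _ => hterm m]
    exact Summable.sum_le_tsum F (fun m _ => by positivity) hsummable
  have h2 : ∑' m : ℕ, q * q ^ m = q * (1 - q)⁻¹ := by
    rw [tsum_mul_left, tsum_geometric_of_lt_one hq0.le hq1]
  have hq2 : q * Real.exp t = 1 := by rw [hqdef, ← Real.exp_add]; simp
  have hexp : 1 + t ≤ Real.exp t := by have := Real.add_one_le_exp t; linarith
  have h3 : q * (1 - q)⁻¹ ≤ 2 / t := by
    rw [← div_eq_mul_inv, div_le_div_iff₀ (by linarith) ht]
    nlinarith [mul_le_mul_of_nonneg_left hexp hq0.le]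
  linarith [h1, h2 ▸ h1, h3]

lemma aux_telescope {a : ℝ} (ha : 0 < a) (ha1 : a ≤ 1) (M : ℕ) :
    ∑ m ∈ Finset.range M, ((m : ℝ) + 1) ^ (a - 1) ≤ (M : ℝ) ^ a / a := by
  rw [le_div_iff₀ ha]
  have key : ∀ m : ℕ, ((m : ℝ) + 1) ^ (a - 1) * a ≤ ((m : ℝ) + 1) ^ a - (m : ℝ) ^ a := by
    intro m
    set n : ℝ := (m : ℝ) + 1 with hn
    have hn0 : (0:ℝ) < n := by positivity
    have hm0 : (0:ℝ) ≤ (m:ℝ) := by positivity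
    have hgm : ((m : ℝ) / n) ^ a * 1 ^ (1 - a) ≤ a * ((m:ℝ)/n) + (1 - a) * 1 :=
      Real.geom_mean_le_arith_mean2_weighted ha.le (by linarith) (by positivity) zero_le_one
        (by ring)
    have hdiv : ((m : ℝ) / n) ^ a = (m : ℝ) ^ a / n ^ a := Real.div_rpow hm0 hn0.le a
    have hpow : n ^ (a - 1) = n ^ a / n := by
      rw [Real.rpow_sub hn0, Real.rpow_one]
    have hna : 0 < n ^ a := Real.rpow_pos_of_pos hn0 a
    rw [hpow]
    rw [Real.one_rpow, mul_one, mul_one, hdiv] at hgm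
    have h5 : (m:ℝ) ^ a ≤ a * ((m:ℝ)/n) * n ^ a + (1 - a) * n ^ a := by
      have := mul_le_mul_of_nonneg_right hgm hna.le
      rw [div_mul_cancel₀ _ (ne_of_gt hna)] at this
      linarith [this]
    have h6 : a * ((m:ℝ)/n) * n ^ a = a * n ^ a - a * (n ^ a / n) := by
      field_simp
      ring
    nlinarith [h5, h6]
  calc (∑ m ∈ Finset.range M, ((m : ℝ) + 1) ^ (a - 1)) * a
      = ∑ m ∈ Finset.range M, ((m : ℝ) + 1) ^ (a - 1) * a := by rw [Finset.sum_mul]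
    _ ≤ ∑ m ∈ Finset.range M, ((((m : ℕ) + 1 : ℕ) : ℝ) ^ a - ((m : ℕ) : ℝ) ^ a) := by
        apply Finset.sum_le_sum
        intro m _
        have := key m
        push_cast
        convert this using 2
    _ = ((M : ℕ) : ℝ) ^ a - ((0 : ℕ) : ℝ) ^ a := Finset.sum_range_sub (fun k : ℕ => ((k : ℕ) : ℝ) ^ a) M
    _ ≤ (M : ℝ) ^ a := by
        simp [Real.zero_rpow (ne_of_gt ha)]


lemma aux_one_dim {a : ℝ} (ha : 0 < a) :
    ∃ c : ℝ, 0 < c ∧ ∀ t : ℝ, 0 < t → ∀ F : Finset ℕ,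
      ∑ m ∈ F, ((m : ℝ) + 1) ^ (a - 1) * Real.exp (-(t * ((m : ℝ) + 1))) ≤ c * t ^ (-a) := by
  rcases le_or_gt 1 a with hage | halt
  · -- case a ≥ 1
    refine ⟨(2 * (a - 1)) ^ (a - 1) * 4 + 1, by
      have h := Real.rpow_nonneg (show (0:ℝ) ≤ 2*(a-1) by linarith) (a-1); linarith, ?_⟩
    intro t ht F
    have hA : (0:ℝ) ≤ (2 * (a - 1)) ^ (a - 1) := Real.rpow_nonneg (by linarith) _
    have hta : (0:ℝ) ≤ t ^ (-a) := Real.rpow_nonneg ht.le _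
    have key : ∀ m : ℕ, ((m : ℝ) + 1) ^ (a - 1) * Real.exp (-(t * ((m : ℝ) + 1))) ≤
        (2 * (a - 1)) ^ (a - 1) * t ^ (-(a-1)) * Real.exp (-(t/2 * ((m:ℝ)+1))) := by
      intro m
      have h1 : ((m:ℝ)+1) ^ (a-1) ≤ ((a-1) / (t/2)) ^ (a-1) * Real.exp (t/2 * ((m:ℝ)+1)) :=
        aux_rpow_le_exp (by linarith) (by linarith) (by positivity)
      have h2 : ((a-1) / (t/2)) ^ (a-1) = (2*(a-1)) ^ (a-1) * t ^ (-(a-1)) := by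
        rw [show (a-1) / (t/2) = (2*(a-1)) / t by ring, Real.div_rpow (by linarith) ht.le,
          Real.rpow_neg ht.le, div_eq_mul_inv]
      calc ((m : ℝ) + 1) ^ (a - 1) * Real.exp (-(t * ((m : ℝ) + 1)))
          ≤ ((a-1)/(t/2))^(a-1) * Real.exp (t/2*((m:ℝ)+1)) * Real.exp (-(t * ((m : ℝ) + 1))) :=
            mul_le_mul_of_nonneg_right h1 (Real.exp_pos _).le
        _ = ((a-1)/(t/2))^(a-1) * Real.exp (-(t/2 * ((m:ℝ)+1))) := by
            rw [mul_assoc, ← Real.exp_add]; congr 2; ring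
        _ = _ := by rw [h2]
    have hsum : ∑ m ∈ F, Real.exp (-(t/2 * ((m:ℝ)+1))) ≤ 2 / (t/2) :=
      aux_geom_sum_le (by linarith : (0:ℝ) < t/2) F
    have hKnn : (0:ℝ) ≤ (2 * (a - 1)) ^ (a - 1) * t ^ (-(a-1)) :=
      mul_nonneg hA (Real.rpow_nonneg ht.le _)
    calc ∑ m ∈ F, ((m : ℝ) + 1) ^ (a - 1) * Real.exp (-(t * ((m : ℝ) + 1)))
        ≤ ∑ m ∈ F, (2 * (a - 1)) ^ (a - 1) * t ^ (-(a-1)) * Real.exp (-(t/2 * ((m:ℝ)+1))) :=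
          Finset.sum_le_sum fun m _ => key m
      _ = (2 * (a - 1)) ^ (a - 1) * t ^ (-(a-1)) * ∑ m ∈ F, Real.exp (-(t/2 * ((m:ℝ)+1))) := by
          rw [Finset.mul_sum]
      _ ≤ (2 * (a - 1)) ^ (a - 1) * t ^ (-(a-1)) * (2/(t/2)) :=
          mul_le_mul_of_nonneg_left hsum hKnn
      _ = (2 * (a - 1)) ^ (a - 1) * 4 * (t ^ (-(a-1)) * t ^ (-1 : ℝ)) := by
          rw [Real.rpow_neg_one]; field_simp; ring
      _ = (2 * (a - 1)) ^ (a - 1) * 4 * t ^ (-a) := by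
          rw [← Real.rpow_add ht]; congr 1; ring
      _ ≤ ((2 * (a - 1)) ^ (a - 1) * 4 + 1) * t ^ (-a) := by nlinarith [hta]
  · -- case a < 1
    refine ⟨4*(2*a)^a + (2^a/a + 2*2^a) + 1, by positivity, ?_⟩
    intro t ht F
    have hta : (0:ℝ) < t ^ (-a) := Real.rpow_pos_of_pos ht _
    have h2a : (0:ℝ) ≤ (2*a)^a := Real.rpow_nonneg (by linarith) _
    have h2ap : (0:ℝ) ≤ (2:ℝ)^a := Real.rpow_nonneg (by norm_num) _
    rcases le_or_gt 1 t with ht1 | ht1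
    · -- t ≥ 1
      have key : ∀ m : ℕ, ((m : ℝ) + 1) ^ (a - 1) * Real.exp (-(t * ((m : ℝ) + 1))) ≤
          Real.exp (-(t/2)) * Real.exp (-(t/2 * ((m:ℝ)+1))) := by
        intro m
        have h1 : ((m:ℝ)+1) ^ (a-1) ≤ 1 :=
          Real.rpow_le_one_of_one_le_of_nonpos (by push_cast; linarith) (by linarith)
        have h2 : Real.exp (-(t * ((m : ℝ) + 1))) ≤
            Real.exp (-(t/2)) * Real.exp (-(t/2 * ((m:ℝ)+1))) := by
          rw [← Real.exp_add]
          apply Real.exp_le_exp.mpr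
          nlinarith [Nat.cast_nonneg (α := ℝ) m]
        calc ((m : ℝ) + 1) ^ (a - 1) * Real.exp (-(t * ((m : ℝ) + 1)))
            ≤ 1 * Real.exp (-(t * ((m : ℝ) + 1))) :=
              mul_le_mul_of_nonneg_right h1 (Real.exp_pos _).le
          _ ≤ _ := by rw [one_mul]; exact h2
      have hsum : ∑ m ∈ F, Real.exp (-(t/2 * ((m:ℝ)+1))) ≤ 2 / (t/2) :=
        aux_geom_sum_le (by linarith : (0:ℝ) < t/2) F
      have hexpbd : Real.exp (-(t/2)) ≤ (2*a)^a * t ^ (-a) := by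
        have hh := aux_rpow_le_exp ha.le (by norm_num : (0:ℝ) < 1/2) ht.le
        have he : Real.exp (-(t/2)) * Real.exp (1/2 * t) = 1 := by
          rw [← Real.exp_add, show -(t/2) + 1/2*t = 0 by ring, Real.exp_zero]
        have h2aeq : (a / (1/2)) = 2*a := by ring
        rw [h2aeq] at hh
        have hmul := mul_le_mul_of_nonneg_left hh (Real.exp_pos (-(t/2))).le
        rw [← mul_assoc, mul_comm (Real.exp (-(t/2))) ((2*a)^a), mul_assoc, he, mul_one] at hmul
        have htap : (0:ℝ) < t ^ a := Real.rpow_pos_of_pos ht _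
        rw [Real.rpow_neg ht.le, ← div_eq_mul_inv, le_div_iff₀ htap]
        exact hmul
      calc ∑ m ∈ F, ((m : ℝ) + 1) ^ (a - 1) * Real.exp (-(t * ((m : ℝ) + 1)))
          ≤ ∑ m ∈ F, Real.exp (-(t/2)) * Real.exp (-(t/2 * ((m:ℝ)+1))) :=
            Finset.sum_le_sum fun m _ => key m
        _ = Real.exp (-(t/2)) * ∑ m ∈ F, Real.exp (-(t/2 * ((m:ℝ)+1))) := by rw [Finset.mul_sum]
        _ ≤ Real.exp (-(t/2)) * (2/(t/2)) := mul_le_mul_of_nonneg_left hsum (Real.exp_pos _).le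
        _ = Real.exp (-(t/2)) * (4/t) := by ring_nf
        _ ≤ ((2*a)^a * t ^ (-a)) * 4 := by
            have h4 : 4/t ≤ 4 := by rw [div_le_iff₀ ht]; linarith
            have := mul_le_mul hexpbd h4 (by positivity) (by positivity)
            linarith [this]
        _ ≤ (4*(2*a)^a + (2^a/a + 2*2^a) + 1) * t ^ (-a) := by
            have hrest : (0:ℝ) ≤ 2^a/a + 2*2^a + 1 := by positivity
            nlinarith [hta.le]
    · -- t < 1
      set M : ℕ := ⌈1/t⌉₊ with hMdef
      have h1t : (1:ℝ) ≤ 1/t := by rw [le_div_iff₀ ht]; linarith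
      have hM1 : 1 ≤ M := Nat.one_le_ceil_iff.mpr (by positivity)
      have hMge : 1/t ≤ (M:ℝ) := Nat.le_ceil _
      have hMle : (M:ℝ) ≤ 2/t := by
        have := Nat.ceil_lt_add_one (le_of_lt (by positivity : (0:ℝ) < 1/t))
        have h2 : (M:ℝ) < 1/t + 1 := this
        have : 1/t + 1 ≤ 2/t := by
          rw [div_add' _ _ _ (ne_of_gt ht), div_le_div_iff₀ ht ht]
          nlinarith
        linarith
      have hMpos : (0:ℝ) < (M:ℝ) := by exact_mod_cast Nat.pos_of_ne_zero (by omega)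
      have hMa : (M:ℝ)^a ≤ 2^a * t^(-a) := by
        calc (M:ℝ)^a ≤ (2/t)^a := Real.rpow_le_rpow hMpos.le hMle ha.le
          _ = 2^a * t^(-a) := by
            rw [Real.div_rpow (by norm_num : (0:ℝ) ≤ 2) ht.le, Real.rpow_neg ht.le,
              div_eq_mul_inv]
      rw [← Finset.sum_filter_add_sum_filter_not F (fun m => m < M)]
      have hhead : ∑ m ∈ F.filter (fun m => m < M),
          ((m : ℝ) + 1) ^ (a - 1) * Real.exp (-(t * ((m : ℝ) + 1))) ≤ 2^a * t^(-a) / a := by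
        have step1 : ∑ m ∈ F.filter (fun m => m < M),
            ((m : ℝ) + 1) ^ (a - 1) * Real.exp (-(t * ((m : ℝ) + 1))) ≤
            ∑ m ∈ F.filter (fun m => m < M), ((m : ℝ) + 1) ^ (a - 1) := by
          apply Finset.sum_le_sum
          intro m _
          have h1 : Real.exp (-(t * ((m : ℝ) + 1))) ≤ 1 :=
            Real.exp_le_one_iff.mpr (by nlinarith [Nat.cast_nonneg (α := ℝ) m])
          have h2 : (0:ℝ) ≤ ((m : ℝ) + 1) ^ (a - 1) := Real.rpow_nonneg (by positivity) _
          nlinarith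
        have step2 : ∑ m ∈ F.filter (fun m => m < M), ((m : ℝ) + 1) ^ (a - 1) ≤
            ∑ m ∈ Finset.range M, ((m : ℝ) + 1) ^ (a - 1) := by
          apply Finset.sum_le_sum_of_subset_of_nonneg
          · intro m hm
            simp only [Finset.mem_filter] at hm
            exact Finset.mem_range.mpr hm.2
          · intro m _ _
            exact Real.rpow_nonneg (by positivity) _
        have step3 := aux_telescope ha halt.le M
        have step4 : (M:ℝ)^a / a ≤ 2^a * t^(-a) / a := by gcongr
        linarith
      have htail : ∑ m ∈ F.filter (fun m => ¬ m < M),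
          ((m : ℝ) + 1) ^ (a - 1) * Real.exp (-(t * ((m : ℝ) + 1))) ≤ 2 * (2^a * t^(-a)) := by
        have hMa1 : (0:ℝ) ≤ (M:ℝ)^(a-1) := Real.rpow_nonneg hMpos.le _
        have step1 : ∑ m ∈ F.filter (fun m => ¬ m < M),
            ((m : ℝ) + 1) ^ (a - 1) * Real.exp (-(t * ((m : ℝ) + 1))) ≤
            ∑ m ∈ F.filter (fun m => ¬ m < M), (M:ℝ)^(a-1) * Real.exp (-(t * ((m : ℝ) + 1))) := by
          apply Finset.sum_le_sum
          intro m hm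
          simp only [Finset.mem_filter, not_lt] at hm
          have hm2 : (M:ℝ) ≤ (m:ℝ) + 1 := by
            have : (M:ℝ) ≤ (m:ℝ) := by exact_mod_cast hm.2
            linarith
          exact mul_le_mul_of_nonneg_right
            (Real.rpow_le_rpow_of_nonpos hMpos hm2 (by linarith)) (Real.exp_pos _).le
        have step2 : ∑ m ∈ F.filter (fun m => ¬ m < M), (M:ℝ)^(a-1) *
            Real.exp (-(t * ((m : ℝ) + 1))) ≤ (M:ℝ)^(a-1) * (2/t) := by
          rw [← Finset.mul_sum]
          exact mul_le_mul_of_nonneg_left (aux_geom_sum_le ht _) hMa1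
        have step3 : (M:ℝ)^(a-1) * (2/t) ≤ (M:ℝ)^(a-1) * (2*M) := by
          apply mul_le_mul_of_nonneg_left ?_ hMa1
          · have h1 : (1/t)*t = 1 := by field_simp
            rw [div_le_iff₀ ht]
            nlinarith [mul_le_mul_of_nonneg_right hMge ht.le]
        have step4 : (M:ℝ)^(a-1) * (2*M) = 2 * (M:ℝ)^a := by
          rw [show (M:ℝ)^(a-1) * (2*M) = 2 * ((M:ℝ)^(a-1) * (M:ℝ)^(1:ℝ)) by
            rw [Real.rpow_one]; ring, ← Real.rpow_add hMpos]
          norm_num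
        have step5 : 2 * (M:ℝ)^a ≤ 2 * (2^a * t^(-a)) := by linarith
        linarith
      have hfinal : 2^a * t^(-a) / a + 2 * (2^a * t^(-a)) ≤
          (4*(2*a)^a + (2^a/a + 2*2^a) + 1) * t ^ (-a) := by
        have e1 : 2^a * t^(-a) / a = (2^a/a) * t^(-a) := by ring
        nlinarith [hta.le, mul_nonneg h2a hta.le]
      linarith

lemma le_supNorm {d : ℕ} (u : Fin d → ℤ) (i : Fin d) : (u i).natAbs ≤ supNorm u := by
  unfold supNorm
  exact Finset.le_sup (f := fun i => (u i).natAbs) (Finset.mem_univ i)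

lemma supNorm_pos {d : ℕ} {u : Fin d → ℤ} (hu : u ≠ 0) : 1 ≤ supNorm u := by
  obtain ⟨i, hi⟩ : ∃ i, u i ≠ 0 := by
    by_contra h; push_neg at h; exact hu (funext fun i => h i)
  exact le_trans (Int.natAbs_pos.mpr hi) (le_supNorm u i)

lemma supNorm_eq_coord {d : ℕ} (hd : 1 ≤ d) (u : Fin d → ℤ) :
    ∃ i, supNorm u = (u i).natAbs := by
  have : Nonempty (Fin d) := ⟨⟨0, hd⟩⟩
  obtain ⟨i, _, hi⟩ := Finset.exists_mem_eq_sup Finset.univ Finset.univ_nonempty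
    (fun i => (u i).natAbs)
  exact ⟨i, hi⟩


lemma aux_shell_card (d : ℕ) (hd : 1 ≤ d) (m : ℕ) (hm : 1 ≤ m) (F : Finset (Fin d → ℤ))
    (hF : ∀ v ∈ F, supNorm v = m) : F.card ≤ 2 * d * (2*m+1)^(d-1) := by
  classical
  have hne : Nonempty (Fin d) := ⟨⟨0, hd⟩⟩
  set big : Finset (Fin d → ℤ) := Finset.univ.biUnion (fun i : Fin d =>
    Fintype.piFinset (fun j => if j = i then ({(m:ℤ), -(m:ℤ)} : Finset ℤ)
      else Finset.Icc (-(m:ℤ)) (m:ℤ))) with hbig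
  have hsubset : F ⊆ big := by
    intro v hv
    obtain ⟨i, hi⟩ := supNorm_eq_coord hd v
    have him : (v i).natAbs = m := by rw [← hi, hF v hv]
    rw [hbig, Finset.mem_biUnion]
    refine ⟨i, Finset.mem_univ i, ?_⟩
    rw [Fintype.mem_piFinset]
    intro j
    by_cases hj : j = i
    · subst hj
      rw [if_pos rfl]
      rcases Int.natAbs_eq_iff.mp him with h | h
      · simp [h]
      · simp [h]
    · rw [if_neg hj, Finset.mem_Icc]
      have h2 := le_supNorm v j
      rw [hF v hv] at h2
      omega
  have hcardpi : ∀ i : Fin d, (Fintype.piFinset (fun j => if j = i then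
      ({(m:ℤ), -(m:ℤ)} : Finset ℤ) else Finset.Icc (-(m:ℤ)) (m:ℤ))).card
      = 2 * (2*m+1)^(d-1) := by
    intro i
    rw [Fintype.card_piFinset]
    rw [← Finset.mul_prod_erase Finset.univ _ (Finset.mem_univ i)]
    have h1 : (if i = i then ({(m:ℤ), -(m:ℤ)} : Finset ℤ)
        else Finset.Icc (-(m:ℤ)) (m:ℤ)).card = 2 := by
      rw [if_pos rfl, Finset.card_insert_of_notMem, Finset.card_singleton]
      rw [Finset.mem_singleton]
      omega
    have h2 : ∏ j ∈ Finset.univ.erase i, (if j = i then ({(m:ℤ), -(m:ℤ)} : Finset ℤ)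
        else Finset.Icc (-(m:ℤ)) (m:ℤ)).card = (2*m+1)^(d-1) := by
      rw [Finset.prod_congr rfl (fun j hj => ?_)]
      · rw [Finset.prod_const, Finset.card_erase_of_mem (Finset.mem_univ i),
          Finset.card_univ, Fintype.card_fin]
      · rw [if_neg (Finset.ne_of_mem_erase hj), Int.card_Icc]
        omega
    rw [h1, h2]
  have hbigcard : big.card ≤ 2 * d * (2*m+1)^(d-1) := by
    calc big.card ≤ ∑ i : Fin d, (Fintype.piFinset (fun j => if j = i then
        ({(m:ℤ), -(m:ℤ)} : Finset ℤ) else Finset.Icc (-(m:ℤ)) (m:ℤ))).card :=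
          Finset.card_biUnion_le
      _ = ∑ _i : Fin d, 2 * (2*m+1)^(d-1) := by
          exact Finset.sum_congr rfl fun i _ => hcardpi i
      _ = 2 * d * (2*m+1)^(d-1) := by
          rw [Finset.sum_const, Finset.card_univ, Fintype.card_fin, smul_eq_mul]; ring
  exact le_trans (Finset.card_le_card hsubset) hbigcard

lemma aux_lattice (d : ℕ) (hd : 1 ≤ d) (φ : ℕ → ℝ) :
    ∑' u : {u : Fin d → ℤ // u ≠ 0}, ENNReal.ofReal (φ (supNorm u.val)) ≤
      ∑' m : ℕ, ((2 * d * (2*(m+1)+1)^(d-1) : ℕ) : ENNReal) * ENNReal.ofReal (φ (m+1)) := by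
  classical
  rw [ENNReal.tsum_eq_iSup_sum]
  apply iSup_le
  intro F
  set n : {u : Fin d → ℤ // u ≠ 0} → ℕ := fun u => supNorm u.val with hn
  set g : ℕ → ℝ≥0∞ := fun k =>
    ((2 * d * (2*(k+1)+1)^(d-1) : ℕ) : ENNReal) * ENNReal.ofReal (φ (k+1)) with hg
  have hmaps : ∀ u ∈ F, n u ∈ F.image n := fun u hu => Finset.mem_image_of_mem n hu
  have hIpos : ∀ m ∈ F.image n, 1 ≤ m := by
    intro m hm
    obtain ⟨u, hu, hum⟩ := Finset.mem_image.mp hm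
    rw [← hum]; exact supNorm_pos u.2
  calc ∑ u ∈ F, ENNReal.ofReal (φ (n u))
      = ∑ m ∈ F.image n, ∑ u ∈ F.filter (fun u => n u = m), ENNReal.ofReal (φ (n u)) :=
        (Finset.sum_fiberwise_of_maps_to hmaps _).symm
    _ ≤ ∑ m ∈ F.image n, ((2 * d * (2*m+1)^(d-1) : ℕ) : ENNReal) * ENNReal.ofReal (φ m) := by
        apply Finset.sum_le_sum
        intro m hm
        have hm1 : 1 ≤ m := hIpos m hm
        have hcongr : ∑ u ∈ F.filter (fun u => n u = m), ENNReal.ofReal (φ (n u)) =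
            ((F.filter (fun u => n u = m)).card : ENNReal) * ENNReal.ofReal (φ m) := by
          rw [Finset.sum_congr rfl (fun u hu => by rw [(Finset.mem_filter.mp hu).2]),
            Finset.sum_const, nsmul_eq_mul]
        rw [hcongr]
        apply mul_le_mul_left
        have hcard : (F.filter (fun u => n u = m)).card ≤ 2 * d * (2*m+1)^(d-1) := by
          have h3 : ((F.filter (fun u => n u = m)).image Subtype.val).card ≤
              2*d*(2*m+1)^(d-1) := by
            apply aux_shell_card d hd m hm1
            intro v hv
            obtain ⟨u, hu, huv⟩ := Finset.mem_image.mp hv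
            rw [← huv]; exact (Finset.mem_filter.mp hu).2
          rwa [Finset.card_image_of_injective _ Subtype.val_injective] at h3
        exact_mod_cast hcard
    _ = ∑ m ∈ F.image n, g (Nat.pred m) := by
        apply Finset.sum_congr rfl
        intro m hm
        have hm1 : 1 ≤ m := hIpos m hm
        have hpm : Nat.pred m + 1 = m := Nat.succ_pred_eq_of_pos hm1
        rw [hg]
        simp only [hpm]
    _ = ∑ k ∈ (F.image n).image Nat.pred, g k := by
        refine (Finset.sum_image ?_).symm
        intro x hx y hy hxy
        have hx1 := hIpos x hx
        have hy1 := hIpos y hy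
        rw [Nat.pred_eq_sub_one, Nat.pred_eq_sub_one] at hxy
        omega
    _ ≤ ∑' k : ℕ, g k := ENNReal.sum_le_tsum _


end AuxLemmas

/-- For `d ≥ 1`, `a > 0` there is `C = C(d,a) > 0` such that for all
`r ≥ 1`, `μ > 0` and `x ∈ Λ_r`,
`Σ_{u≠0} ‖x+ru‖_∞^{-(d-a)} e^{-μ‖x+ru‖_∞} ≤ C e^{-μr/4} μ^{-a} r^{-d}`. -/
theorem lattice_sum_estimate (d : ℕ) (hd : 1 ≤ d) (a : ℝ) (ha : 0 < a) :
    ∃ C : ℝ, 0 < C ∧ ∀ r : ℕ, 1 ≤ r → ∀ μ : ℝ, 0 < μ → ∀ x ∈ boxFinset d r,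
      ∑' u : {u : Fin d → ℤ // u ≠ 0},
          ((supNorm (x + r • (u : Fin d → ℤ)) : ℝ)) ^ (-((d : ℝ) - a)) *
            Real.exp (-μ * (supNorm (x + r • (u : Fin d → ℤ)) : ℝ)) ≤
        C * Real.exp (-μ * r / 4) * μ ^ (-a) * ((r : ℝ) ^ d)⁻¹ := by
  classical
  obtain ⟨c₃, hc₃, hc₃le⟩ := aux_one_dim ha
  set p : ℝ := a - d with hp
  have h2pos : ∀ q : ℝ, (0:ℝ) < 2 ^ q := fun q => Real.rpow_pos_of_pos (by norm_num) q
  set c₁ : ℝ := 2 ^ (-p) + 2 ^ p with hc₁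
  have hc₁pos : (0:ℝ) < c₁ := by rw [hc₁]; have := h2pos (-p); have := h2pos p; linarith
  set cd : ℝ := ((2 * d * 3 ^ (d - 1) : ℕ) : ℝ) with hcd
  have hcdpos : (0:ℝ) < cd := by
    rw [hcd]
    have h3 : 0 < 3 ^ (d-1) := pow_pos (by norm_num) _
    exact_mod_cast Nat.mul_pos (Nat.mul_pos (by norm_num) hd) h3
  have h4a : (0:ℝ) < 4 ^ a := Real.rpow_pos_of_pos (by norm_num) a
  refine ⟨c₁ * cd * c₃ * 4 ^ a, by positivity, ?_⟩
  intro r hr μ hμ x hx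
  set t : ℝ := μ * r / 4 with ht
  have hrpos : (0:ℝ) < r := by exact_mod_cast hr
  have htpos : 0 < t := by rw [ht]; positivity
  -- box coordinate bound
  have hxbd : ∀ i, (2 * x i).natAbs ≤ r := by
    intro i
    have hxi := (Fintype.mem_piFinset.mp hx) i
    unfold boxCoord at hxi
    rw [Finset.mem_filter] at hxi
    omega
  -- key natural-number norm estimates
  have hkeyN : ∀ u : Fin d → ℤ, u ≠ 0 →
      r * supNorm u ≤ 2 * supNorm (x + r • u) ∧
      supNorm (x + r • u) ≤ 2 * (r * supNorm u) := by
    intro u hu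
    have happly : ∀ i, (x + r • u) i = x i + (r:ℤ) * u i := by
      intro i
      simp [Pi.add_apply, Pi.smul_apply, nsmul_eq_mul]
    have hm1 : 1 ≤ supNorm u := supNorm_pos hu
    constructor
    · obtain ⟨i, hi⟩ := supNorm_eq_coord hd u
      have h1 : (x i + (r:ℤ) * u i).natAbs ≤ supNorm (x + r • u) := by
        have h := le_supNorm (x + r • u) i
        rwa [happly i] at h
      have h2 := hxbd i
      have hZ : (r:ℤ) * ((u i).natAbs : ℤ) ≤ 2 * ((x i + (r:ℤ) * u i).natAbs : ℤ) := by
        have e1 : |(r:ℤ) * u i| - |-(x i)| ≤ |(r:ℤ) * u i - -(x i)| := abs_sub_abs_le_abs_sub _ _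
        rw [abs_neg, sub_neg_eq_add] at e1
        have e2 : |(r:ℤ) * u i| = (r:ℤ) * |u i| := by
          rw [abs_mul, abs_of_nonneg (by positivity : (0:ℤ) ≤ (r:ℤ))]
        have e3 : 2 * |x i| ≤ (r:ℤ) := by
          have : ((2 * x i).natAbs : ℤ) ≤ (r:ℤ) := by exact_mod_cast h2
          rw [Int.natCast_natAbs, abs_mul] at this
          simpa using this
        have e4 : (r:ℤ) ≤ (r:ℤ) * |u i| := by
          have hui : (1:ℤ) ≤ |u i| := by
            have : 1 ≤ ((u i).natAbs : ℤ) := by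
              have : 1 ≤ (u i).natAbs := by omega
              exact_mod_cast this
            rwa [Int.natCast_natAbs] at this
          nlinarith [hrpos]
        have e5 : ((x i + (r:ℤ) * u i).natAbs : ℤ) = |x i + (r:ℤ) * u i| := Int.natCast_natAbs _
        have e6 : ((u i).natAbs : ℤ) = |u i| := Int.natCast_natAbs _
        rw [e5, e6]
        have e7 : |(r:ℤ) * u i + x i| = |x i + (r:ℤ) * u i| := by rw [add_comm]
        rw [e2, e7] at e1
        linarith
      have hZ' : r * (u i).natAbs ≤ 2 * (x i + (r:ℤ) * u i).natAbs := by exact_mod_cast hZ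
      calc r * supNorm u = r * (u i).natAbs := by rw [hi]
        _ ≤ 2 * (x i + (r:ℤ) * u i).natAbs := hZ'
        _ ≤ 2 * supNorm (x + r • u) := by omega
    · unfold supNorm
      apply Finset.sup_le
      intro i _
      rw [happly i]
      have h2 := hxbd i
      have hZ : ((x i + (r:ℤ) * u i).natAbs : ℤ) ≤ 2 * ((r:ℤ) * (supNorm u : ℤ)) := by
        rw [Int.natCast_natAbs]
        have e1 : |x i + (r:ℤ) * u i| ≤ |x i| + |(r:ℤ) * u i| := abs_add_le _ _
        have e2 : |(r:ℤ) * u i| = (r:ℤ) * |u i| := by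
          rw [abs_mul, abs_of_nonneg (by positivity : (0:ℤ) ≤ (r:ℤ))]
        have e3 : 2 * |x i| ≤ (r:ℤ) := by
          have : ((2 * x i).natAbs : ℤ) ≤ (r:ℤ) := by exact_mod_cast h2
          rw [Int.natCast_natAbs, abs_mul] at this
          simpa using this
        have e4 : |u i| ≤ (supNorm u : ℤ) := by
          have := le_supNorm u i
          have h5 : ((u i).natAbs : ℤ) ≤ (supNorm u : ℤ) := by exact_mod_cast this
          rwa [Int.natCast_natAbs] at h5
        have e5 : (r:ℤ) * |u i| ≤ (r:ℤ) * (supNorm u : ℤ) :=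
          mul_le_mul_of_nonneg_left e4 (by positivity)
        have e6 : (r:ℤ) ≤ (r:ℤ) * (supNorm u : ℤ) := by
          have hm1' : (1:ℤ) ≤ (supNorm u : ℤ) := by exact_mod_cast hm1
          nlinarith [hrpos]
        have hx0 : (0:ℤ) ≤ |x i| := abs_nonneg _
        linarith
      have : ((x i + (r:ℤ) * u i).natAbs : ℤ) ≤ ((2 * (r * supNorm u) : ℕ) : ℤ) := by
        push_cast
        push_cast at hZ
        linarith
      exact_mod_cast this
  -- the comparison function
  set φ : ℕ → ℝ := fun m =>
    c₁ * (r:ℝ) ^ p * Real.exp (-t) * (((m:ℕ):ℝ) ^ p * Real.exp (-(t * ((m:ℕ):ℝ)))) with hφ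
  have hφnn : ∀ m : ℕ, 0 ≤ φ m := by
    intro m
    rw [hφ]
    have h1 : (0:ℝ) ≤ ((m:ℕ):ℝ) ^ p := Real.rpow_nonneg (Nat.cast_nonneg _) _
    have h2 : (0:ℝ) ≤ (r:ℝ) ^ p := Real.rpow_nonneg (Nat.cast_nonneg _) _
    positivity
  -- pointwise bound
  have hpoint : ∀ u : {u : Fin d → ℤ // u ≠ 0},
      ((supNorm (x + r • (u : Fin d → ℤ)) : ℝ)) ^ (-((d : ℝ) - a)) *
        Real.exp (-μ * (supNorm (x + r • (u : Fin d → ℤ)) : ℝ)) ≤ φ (supNorm (u : Fin d → ℤ)) := by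
    rintro ⟨u, hu⟩
    obtain ⟨hb, hcc⟩ := hkeyN u hu
    set N : ℕ := supNorm (x + r • u) with hN
    set m : ℕ := supNorm u with hm
    have hm1 : 1 ≤ m := supNorm_pos hu
    have hmR : (1:ℝ) ≤ (m:ℝ) := by exact_mod_cast hm1
    have hNlow : (r:ℝ) * m / 2 ≤ (N:ℝ) := by
      have : ((r * m : ℕ) : ℝ) ≤ ((2 * N : ℕ) : ℝ) := by exact_mod_cast hb
      push_cast at this
      linarith
    have hNhigh : (N:ℝ) ≤ 2 * ((r:ℝ) * m) := by
      have : ((N : ℕ) : ℝ) ≤ ((2 * (r * m) : ℕ) : ℝ) := by exact_mod_cast hcc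
      push_cast at this
      linarith
    have hApos : (0:ℝ) < (r:ℝ) * m / 2 := by positivity
    have hrp : ((N:ℕ):ℝ) ^ (-((d:ℝ) - a)) ≤ ((r:ℝ)*m/2) ^ p + (2*((r:ℝ)*m)) ^ p := by
      have hpe : -((d:ℝ) - a) = p := by rw [hp]; ring
      rw [hpe]
      rcases le_or_gt 0 p with h0 | h0
      · have h1 : ((N:ℕ):ℝ) ^ p ≤ (2*((r:ℝ)*m)) ^ p :=
          Real.rpow_le_rpow (Nat.cast_nonneg _) hNhigh h0
        have h2 : (0:ℝ) ≤ ((r:ℝ)*m/2) ^ p := Real.rpow_nonneg hApos.le _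
        linarith
      · have h1 : ((N:ℕ):ℝ) ^ p ≤ ((r:ℝ)*m/2) ^ p :=
          Real.rpow_le_rpow_of_nonpos hApos hNlow h0.le
        have h2 : (0:ℝ) ≤ (2*((r:ℝ)*m)) ^ p := Real.rpow_nonneg (by positivity) _
        linarith
    have hexp : Real.exp (-μ * (N:ℝ)) ≤ Real.exp (-t) * Real.exp (-(t * (m:ℝ))) := by
      rw [← Real.exp_add]
      apply Real.exp_le_exp.mpr
      have h2 : μ * ((r:ℝ) * m / 2) ≤ μ * N := mul_le_mul_of_nonneg_left hNlow hμ.le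
      have h4 : t * 1 ≤ t * m := mul_le_mul_of_nonneg_left hmR htpos.le
      rw [mul_one] at h4
      have h5 : 2 * (t * m) = μ * ((r:ℝ) * m / 2) := by rw [ht]; ring
      linarith
    have halg : ((r:ℝ)*m/2) ^ p + (2*((r:ℝ)*m)) ^ p = c₁ * ((r:ℝ) ^ p * (m:ℝ) ^ p) := by
      have hrm : (0:ℝ) ≤ (r:ℝ) * m := by positivity
      have h2p : ((2:ℝ)) ^ p ≠ 0 := ne_of_gt (h2pos p)
      rw [Real.div_rpow hrm (by norm_num : (0:ℝ) ≤ 2),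
        Real.mul_rpow (by norm_num : (0:ℝ) ≤ 2) hrm,
        Real.mul_rpow (Nat.cast_nonneg r) (Nat.cast_nonneg m), hc₁,
        Real.rpow_neg (by norm_num : (0:ℝ) ≤ 2)]
      field_simp
    calc ((N:ℕ):ℝ) ^ (-((d:ℝ) - a)) * Real.exp (-μ * (N:ℝ))
        ≤ (((r:ℝ)*m/2) ^ p + (2*((r:ℝ)*m)) ^ p) * (Real.exp (-t) * Real.exp (-(t * (m:ℝ)))) := by
          apply mul_le_mul hrp hexp (Real.exp_pos _).le
          have h2 : (0:ℝ) ≤ ((r:ℝ)*m/2) ^ p := Real.rpow_nonneg hApos.le _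
          have h3 : (0:ℝ) ≤ (2*((r:ℝ)*m)) ^ p := Real.rpow_nonneg (by positivity) _
          linarith
      _ = φ m := by rw [halg, hφ]; ring
  -- the one-dimensional sum bound, in ℝ≥0∞
  have hsum1d : ∑' m : ℕ, ENNReal.ofReal (((m:ℝ)+1) ^ (a-1) * Real.exp (-(t * ((m:ℝ)+1)))) ≤
      ENNReal.ofReal (c₃ * t ^ (-a)) := by
    rw [ENNReal.tsum_eq_iSup_sum]
    apply iSup_le
    intro F
    rw [← ENNReal.ofReal_sum_of_nonneg (fun m _ => by positivity)]
    exact ENNReal.ofReal_le_ofReal (hc₃le t htpos F)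
  have hKnn : (0:ℝ) ≤ c₁ * (r:ℝ) ^ p * Real.exp (-t) * cd := by
    have h2 : (0:ℝ) ≤ (r:ℝ) ^ p := Real.rpow_nonneg (Nat.cast_nonneg _) _
    exact mul_nonneg (mul_nonneg (mul_nonneg hc₁pos.le h2) (Real.exp_pos _).le) hcdpos.le
  -- main ENNReal chain
  have hchain : ∑' u : {u : Fin d → ℤ // u ≠ 0},
      ENNReal.ofReal (((supNorm (x + r • (u : Fin d → ℤ)) : ℝ)) ^ (-((d : ℝ) - a)) *
        Real.exp (-μ * (supNorm (x + r • (u : Fin d → ℤ)) : ℝ))) ≤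
      ENNReal.ofReal ((c₁ * (r:ℝ) ^ p * Real.exp (-t) * cd) * (c₃ * t ^ (-a))) := by
    calc ∑' u : {u : Fin d → ℤ // u ≠ 0},
        ENNReal.ofReal (((supNorm (x + r • (u : Fin d → ℤ)) : ℝ)) ^ (-((d : ℝ) - a)) *
          Real.exp (-μ * (supNorm (x + r • (u : Fin d → ℤ)) : ℝ)))
        ≤ ∑' u : {u : Fin d → ℤ // u ≠ 0}, ENNReal.ofReal (φ (supNorm (u : Fin d → ℤ))) :=
          ENNReal.tsum_le_tsum fun u => ENNReal.ofReal_le_ofReal (hpoint u)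
      _ ≤ ∑' m : ℕ, ((2 * d * (2*(m+1)+1)^(d-1) : ℕ) : ENNReal) * ENNReal.ofReal (φ (m+1)) :=
          aux_lattice d hd φ
      _ ≤ ∑' m : ℕ, ENNReal.ofReal ((c₁ * (r:ℝ) ^ p * Real.exp (-t) * cd) *
            (((m:ℝ)+1) ^ (a-1) * Real.exp (-(t * ((m:ℝ)+1))))) := by
          apply ENNReal.tsum_le_tsum
          intro m
          rw [show (((2 * d * (2*(m+1)+1)^(d-1) : ℕ) : ENNReal)) =
            ENNReal.ofReal (((2 * d * (2*(m+1)+1)^(d-1) : ℕ) : ℝ)) from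
              (ENNReal.ofReal_natCast _).symm,
            ← ENNReal.ofReal_mul (Nat.cast_nonneg _)]
          apply ENNReal.ofReal_le_ofReal
          have hme : (0:ℝ) < (m:ℝ) + 1 := by positivity
          have hcnt : ((2 * d * (2*(m+1)+1)^(d-1) : ℕ) : ℝ) ≤ cd * ((m:ℝ)+1) ^ (d-1 : ℕ) := by
            have hnat : (2 * d * (2*(m+1)+1)^(d-1) : ℕ) ≤ 2*d*3^(d-1) * (m+1)^(d-1) := by
              have h1 : (2*(m+1)+1)^(d-1) ≤ (3*(m+1))^(d-1) :=
                Nat.pow_le_pow_left (by omega) _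
              calc 2*d*(2*(m+1)+1)^(d-1) ≤ 2*d*((3*(m+1))^(d-1)) :=
                    Nat.mul_le_mul_left _ h1
                _ = 2*d*3^(d-1) * (m+1)^(d-1) := by rw [Nat.mul_pow]; ring
            calc ((2 * d * (2*(m+1)+1)^(d-1) : ℕ) : ℝ)
                ≤ ((2*d*3^(d-1) * (m+1)^(d-1) : ℕ) : ℝ) := by exact_mod_cast hnat
              _ = cd * ((m:ℝ)+1) ^ (d-1 : ℕ) := by rw [hcd]; push_cast; ring
          have hmp : ((m:ℝ)+1) ^ (d-1 : ℕ) * ((m:ℝ)+1) ^ p = ((m:ℝ)+1) ^ (a-1) := by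
            rw [← Real.rpow_natCast ((m:ℝ)+1) (d-1), ← Real.rpow_add hme]
            congr 1
            rw [Nat.cast_sub hd, hp]
            ring
          have hφm : φ (m+1) = c₁ * (r:ℝ) ^ p * Real.exp (-t) *
              (((m:ℝ)+1) ^ p * Real.exp (-(t * ((m:ℝ)+1)))) := by
            rw [hφ]
            push_cast
            ring_nf
          have hφnn' : (0:ℝ) ≤ c₁ * (r:ℝ) ^ p * Real.exp (-t) *
              (((m:ℝ)+1) ^ p * Real.exp (-(t * ((m:ℝ)+1)))) := by
            rw [← hφm]; exact hφnn (m+1)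
          calc ((2 * d * (2*(m+1)+1)^(d-1) : ℕ) : ℝ) * φ (m+1)
              ≤ (cd * ((m:ℝ)+1) ^ (d-1 : ℕ)) * (c₁ * (r:ℝ) ^ p * Real.exp (-t) *
                  (((m:ℝ)+1) ^ p * Real.exp (-(t * ((m:ℝ)+1))))) := by
                rw [hφm]
                exact mul_le_mul_of_nonneg_right hcnt hφnn'
            _ = (c₁ * (r:ℝ) ^ p * Real.exp (-t) * cd) *
                  ((((m:ℝ)+1) ^ (d-1 : ℕ) * ((m:ℝ)+1) ^ p) * Real.exp (-(t * ((m:ℝ)+1)))) := by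
                ring
            _ = (c₁ * (r:ℝ) ^ p * Real.exp (-t) * cd) *
                  (((m:ℝ)+1) ^ (a-1) * Real.exp (-(t * ((m:ℝ)+1)))) := by rw [hmp]
      _ = ENNReal.ofReal (c₁ * (r:ℝ) ^ p * Real.exp (-t) * cd) *
            ∑' m : ℕ, ENNReal.ofReal (((m:ℝ)+1) ^ (a-1) * Real.exp (-(t * ((m:ℝ)+1)))) := by
          rw [← ENNReal.tsum_mul_left]
          apply tsum_congr
          intro m
          rw [← ENNReal.ofReal_mul hKnn]
      _ ≤ ENNReal.ofReal (c₁ * (r:ℝ) ^ p * Real.exp (-t) * cd) * ENNReal.ofReal (c₃ * t ^ (-a)) :=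
          mul_le_mul_right hsum1d _
      _ = ENNReal.ofReal ((c₁ * (r:ℝ) ^ p * Real.exp (-t) * cd) * (c₃ * t ^ (-a))) :=
          (ENNReal.ofReal_mul hKnn).symm
  -- identify the right-hand side
  have hRHSval : (c₁ * (r:ℝ) ^ p * Real.exp (-t) * cd) * (c₃ * t ^ (-a)) =
      (c₁ * cd * c₃ * 4 ^ a) * Real.exp (-μ * r / 4) * μ ^ (-a) * ((r:ℝ) ^ d)⁻¹ := by
    have h4 : t ^ (-a) = (μ ^ (-a) * ((r:ℝ)) ^ (-a)) * 4 ^ a := by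
      rw [ht, show μ * (r:ℝ) / 4 = (μ * (r:ℝ)) * (4:ℝ)⁻¹ by ring,
        Real.mul_rpow (by positivity) (by norm_num : (0:ℝ) ≤ (4:ℝ)⁻¹),
        Real.mul_rpow hμ.le (Nat.cast_nonneg r),
        Real.inv_rpow (by norm_num : (0:ℝ) ≤ 4),
        Real.rpow_neg (by norm_num : (0:ℝ) ≤ 4), inv_inv]
    have h5 : (r:ℝ) ^ p * (r:ℝ) ^ (-a) = ((r:ℝ) ^ d)⁻¹ := by
      rw [← Real.rpow_add hrpos, hp, show a - (d:ℝ) + -a = -(d:ℝ) by ring,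
        Real.rpow_neg hrpos.le, Real.rpow_natCast]
    have h6 : Real.exp (-t) = Real.exp (-μ * r / 4) := by
      congr 1
      rw [ht]
      ring
    rw [h4, ← h5, h6]
    ring
  rw [hRHSval] at hchain
  -- convert back to a real inequality
  have hfnn : ∀ u : {u : Fin d → ℤ // u ≠ 0},
      0 ≤ ((supNorm (x + r • (u : Fin d → ℤ)) : ℝ)) ^ (-((d : ℝ) - a)) *
        Real.exp (-μ * (supNorm (x + r • (u : Fin d → ℤ)) : ℝ)) := fun u =>
    mul_nonneg (Real.rpow_nonneg (Nat.cast_nonneg _) _) (Real.exp_pos _).le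
  have hRHSnn : (0:ℝ) ≤ c₁ * cd * c₃ * 4 ^ a * Real.exp (-μ * r / 4) * μ ^ (-a) *
      ((r:ℝ) ^ d)⁻¹ := by
    have h1 : (0:ℝ) ≤ μ ^ (-a) := Real.rpow_nonneg hμ.le _
    have h2 := Real.exp_pos (-μ * (r:ℝ) / 4)
    positivity
  have hne : (∑' u : {u : Fin d → ℤ // u ≠ 0},
      ENNReal.ofReal (((supNorm (x + r • (u : Fin d → ℤ)) : ℝ)) ^ (-((d : ℝ) - a)) *
        Real.exp (-μ * (supNorm (x + r • (u : Fin d → ℤ)) : ℝ)))) ≠ ⊤ :=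
    ne_top_of_le_ne_top ENNReal.ofReal_ne_top hchain
  have hsummable : Summable fun u : {u : Fin d → ℤ // u ≠ 0} =>
      ((supNorm (x + r • (u : Fin d → ℤ)) : ℝ)) ^ (-((d : ℝ) - a)) *
        Real.exp (-μ * (supNorm (x + r • (u : Fin d → ℤ)) : ℝ)) := by
    have h := ENNReal.summable_toReal hne
    refine h.congr fun u => ?_
    rw [ENNReal.toReal_ofReal (hfnn u)]
  rw [← ENNReal.ofReal_tsum_of_nonneg hfnn hsummable] at hchain
  exact (ENNReal.ofReal_le_ofReal_iff hRHSnn).mp hchain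


end IsingPlateau
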